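/- Let f : ℝ → ℝ be continuous with antiderivative F, g : ℝ → ℝ continuous, μ real, m, n ≥ 1. Then x(t) = e^{μ^{2m−1} F(t)} / ((2n−1) ∫_{−∞}^t g(r) e^{(2n−1) μ^{2m−1} F(r)} dr)^{1/(2n−1)} is a solution of ẋ = μ^{2m−1} f(t) x − g(t) x^{2n}, provided the integral converges and is positive for all t. -/

import Mathlib

open MeasureTheory

lemma aux_hasDerivAt_integral_Iic (h : ℝ → ℝ) (hc : Continuous h)
    (hi : ∀ t : ℝ, IntegrableOn h (Set.Iic t)) (t : ℝ) :
    HasDerivAt (fun τ => ∫ r in Set.Iic τ, h r) (h t) t := by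
  have key : (fun τ => ∫ r in Set.Iic τ, h r)
      = fun τ => (∫ r in Set.Iic t, h r) + ∫ r in t..τ, h r := by
    funext τ
    rw [← intervalIntegral.integral_Iic_sub_Iic (hi t) (hi τ)]
    ring
  rw [key]
  have hd : HasDerivAt (fun τ => ∫ r in t..τ, h r) (h t) t :=
    intervalIntegral.integral_hasDerivAt_right (hc.intervalIntegrable t t)
      hc.aestronglyMeasurable.stronglyMeasurableAtFilter hc.continuousAt
  exact hd.const_add _

theorem stmt12 (f g F : ℝ → ℝ) (hf : Continuous f) (hg : Continuous g)
    (hF : ∀ t, HasDerivAt F (f t) t)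
    (μ : ℝ) (m n : ℕ) (hm : 1 ≤ m) (hn : 1 ≤ n)
    (hint : ∀ t : ℝ, IntegrableOn
      (fun r => g r * Real.exp ((2 * (n : ℝ) - 1) * μ ^ (2 * m - 1) * F r)) (Set.Iic t))
    (hpos : ∀ t : ℝ,
      0 < (2 * (n : ℝ) - 1) *
        ∫ r in Set.Iic t, g r * Real.exp ((2 * (n : ℝ) - 1) * μ ^ (2 * m - 1) * F r)) :
    ∀ t : ℝ,
      HasDerivAt
        (fun τ => Real.exp (μ ^ (2 * m - 1) * F τ) /
          ((2 * (n : ℝ) - 1) *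
            ∫ r in Set.Iic τ, g r * Real.exp ((2 * (n : ℝ) - 1) * μ ^ (2 * m - 1) * F r))
            ^ ((1 : ℝ) / (2 * n - 1)))
        (μ ^ (2 * m - 1) * f t *
          (Real.exp (μ ^ (2 * m - 1) * F t) /
            ((2 * (n : ℝ) - 1) *
              ∫ r in Set.Iic t, g r * Real.exp ((2 * (n : ℝ) - 1) * μ ^ (2 * m - 1) * F r))
              ^ ((1 : ℝ) / (2 * n - 1))) -
          g t *
            (Real.exp (μ ^ (2 * m - 1) * F t) /
              ((2 * (n : ℝ) - 1) *
                ∫ r in Set.Iic t, g r * Real.exp ((2 * (n : ℝ) - 1) * μ ^ (2 * m - 1) * F r))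
                ^ ((1 : ℝ) / (2 * n - 1))) ^ (2 * n)) t := by
  intro t
  set c : ℝ := μ ^ (2 * m - 1) with hcdef
  set k : ℝ := 2 * (n : ℝ) - 1 with hkdef
  have hn1 : (1:ℝ) ≤ (n:ℝ) := by exact_mod_cast hn
  have hk : (0:ℝ) < k := by rw [hkdef]; linarith
  have hk0 : k ≠ 0 := hk.ne'
  have hFc : Continuous F := by
    rw [continuous_iff_continuousAt]; exact fun s => (hF s).continuousAt
  set h : ℝ → ℝ := fun r => g r * Real.exp (k * c * F r) with hhdef
  have hhc : Continuous h := hg.mul (Real.continuous_exp.comp ((continuous_const).mul hFc))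
  set I : ℝ → ℝ := fun τ => ∫ r in Set.Iic τ, h r with hIdef
  have hI : HasDerivAt I (h t) t := aux_hasDerivAt_integral_Iic h hhc hint t
  set r : ℝ := -(1 / k) with hrdef
  have hrk : r * k = -1 := by rw [hrdef]; field_simp
  set P : ℝ := k * I t with hPdef
  have hP : 0 < P := hpos t
  -- derivative of inner k * I
  have hkI : HasDerivAt (fun τ => k * I τ) (k * h t) t := hI.const_mul k
  have hB : HasDerivAt (fun τ => (k * I τ) ^ r) (r * P ^ (r - 1) * (k * h t)) t :=
    by have := (Real.hasDerivAt_rpow_const (x := P) (p := r) (Or.inl hP.ne')).comp t hkI; exact this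
  have hA : HasDerivAt (fun τ => Real.exp (c * F τ)) (Real.exp (c * F t) * (c * f t)) t :=
    (((hF t).const_mul c).exp)
  have hx : HasDerivAt (fun τ => Real.exp (c * F τ) * (k * I τ) ^ r)
      (Real.exp (c * F t) * (c * f t) * P ^ r + Real.exp (c * F t) * (r * P ^ (r - 1) * (k * h t))) t :=
    hA.mul hB
  have hfun : (fun τ => Real.exp (c * F τ) /
      ((k * ∫ r in Set.Iic τ, g r * Real.exp (k * c * F r)) ^ ((1:ℝ) / k)))
      = fun τ => Real.exp (c * F τ) * (k * I τ) ^ r := by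
    funext τ
    rw [hrdef, Real.rpow_neg (hpos τ).le, div_eq_mul_inv]
  have hcast : ((2 * n : ℕ) : ℝ) = k + 1 := by push_cast; rw [hkdef]; ring
  have hxpow : (Real.exp (c * F t) * P ^ r) ^ (2 * n)
      = Real.exp (c * F t) * Real.exp (k * c * F t) * P ^ (r - 1) := by
    rw [mul_pow, ← Real.rpow_natCast (P ^ r) (2 * n), ← Real.rpow_mul hP.le, hcast,
      ← Real.exp_nat_mul, hcast]
    have h1 : r * (k + 1) = r - 1 := by rw [hrdef]; field_simp; ring
    have h2 : (k + 1) * (c * F t) = c * F t + k * c * F t := by ring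
    rw [h1, h2, Real.exp_add]
  rw [show ((2 * (n:ℝ) - 1)) = k from rfl] at *
  rw [hfun]
  have heq : c * f t * (Real.exp (c * F t) * P ^ r)
        - g t * (Real.exp (c * F t) * P ^ r) ^ (2 * n)
      = Real.exp (c * F t) * (c * f t) * P ^ r
        + Real.exp (c * F t) * (r * P ^ (r - 1) * (k * h t)) := by
    rw [hxpow, hhdef]
    have : Real.exp (c * F t) * (r * P ^ (r - 1) * (k * (g t * Real.exp (k * c * F t))))
        = (r * k) * (g t * (Real.exp (c * F t) * Real.exp (k * c * F t) * P ^ (r - 1))) := by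
      ring
    rw [this, hrk]; ring
  rw [← hfun] at hx
  convert hx using 1
  · exact hfun.symm
  · have hdiv : Real.exp (c * F t) / P ^ ((1:ℝ) / k) = Real.exp (c * F t) * P ^ r := by
      rw [hrdef, Real.rpow_neg hP.le, div_eq_mul_inv]
    rw [hdiv]
    exact heq
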